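/- If an acyclic matching M on a free chain complex with basis (C_*, Ω) matches every basis element (no critical cells), then C_* is acyclic: H_n(C_*) = 0 for all n. -/

import Mathlib

open Finset

universe u

/-- A free chain complex with a chosen basis: basis elements `B` graded by `dim`,
finitely many in each degree, with differential determined by the weights
`w b a` (the coefficient of `a` in `∂ b`), supported in consecutive degrees
and squaring to zero. -/
structure BasedComplex (R : Type u) [CommRing R] : Type (u + 1) where
  B : Type u
  [deceq : DecidableEq B]
  dim : B → ℤ
  [fin : ∀ n : ℤ, Fintype {b : B // dim b = n}]
  w : B → B → R
  w_dim : ∀ b a, w b a ≠ 0 → dim a = dim b - 1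
  dsq : ∀ b z : B, (∑ y : {y : B // dim y = dim b - 1}, w b (y : B) * w (y : B) z) = 0

attribute [instance] BasedComplex.deceq BasedComplex.fin

variable {R : Type u} [CommRing R]

/-- The chain complex is bounded on the right (degrees bounded below). -/
def BasedComplex.BoundedBelow (C : BasedComplex R) : Prop :=
  ∃ N : ℤ, ∀ b : C.B, N ≤ C.dim b

/-- A partial matching on the basis: a set of pairs `(a, b)` with `b` of one higher
degree, invertible weight `w b a`, and all members of all pairs pairwise distinct. -/
def IsMatching (C : BasedComplex R) (M : Set (C.B × C.B)) : Prop :=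
  (∀ p ∈ M, C.dim p.2 = C.dim p.1 + 1 ∧ IsUnit (C.w p.2 p.1)) ∧
  (∀ p ∈ M, ∀ q ∈ M, p ≠ q → p.1 ≠ q.1 ∧ p.1 ≠ q.2 ∧ p.2 ≠ q.1 ∧ p.2 ≠ q.2)

/-- A basis element is critical if it appears in no matched pair. -/
def IsCritical (C : BasedComplex R) (M : Set (C.B × C.B)) (x : C.B) : Prop :=
  ∀ p ∈ M, p.1 ≠ x ∧ p.2 ≠ x

/-- Existence of an alternating cycle `d(b₁) ≺ b₁ ≻ d(b₂) ≺ ⋯ ≺ bₙ ≻ d(b₁)`,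
`n ≥ 2`, with distinct matched pairs `(d(bᵢ), bᵢ) ∈ M`, with respect to a weight
function `w` (nonzero weight plays the role of the covering relation). -/
def HasAltCycleW {B : Type u} (w : B → B → R) (M : Set (B × B)) : Prop :=
  ∃ n : ℕ, ∃ f : Fin (n + 2) → B × B, Function.Injective f ∧
    (∀ i, f i ∈ M) ∧ ∀ i, w (f i).2 (f (i + 1)).1 ≠ 0

/-- An acyclic matching: a partial matching admitting no alternating cycle. -/
def IsAcyclicMatching (C : BasedComplex R) (M : Set (C.B × C.B)) : Prop :=
  IsMatching C M ∧ ¬ HasAltCycleW C.w M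

/-- The weight of an alternating path `s ≻ a₁ ≺ b₁ ≻ a₂ ≺ b₂ ≻ ⋯ ≺ bₙ ≻ t`
(encoded by its list of intermediate matched pairs `(aᵢ, bᵢ)`), namely
`(-1)ⁿ ∏ w(down-edges) / ∏ w(matching edges)`. -/
noncomputable def pathWeightW {B : Type u} (w : B → B → R) : B → List (B × B) → B → R
  | s, [], t => w s t
  | s, p :: L, t => -(w s p.1) * Ring.inverse (w p.2 p.1) * pathWeightW w p.2 L t

open Classical in
/-- The Morse-differential coefficient from `s` to `t`: the sum of the weights of all
alternating paths from `s` to `t` whose intermediate pairs are distinct members of `M`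
(paths through pairs of the wrong degrees have weight `0`). -/
noncomputable def morseCoeffW (C : BasedComplex R) (w' : C.B → C.B → R)
    (M : Set (C.B × C.B)) (s t : C.B) : R :=
  ∑ k ∈ Finset.range
      (Fintype.card ({a : C.B // C.dim a = C.dim s - 1} × {b : C.B // C.dim b = C.dim s}) + 1),
    ∑ f : Fin k → {a : C.B // C.dim a = C.dim s - 1} × {b : C.B // C.dim b = C.dim s},
      if Function.Injective f ∧ ∀ i, (((f i).1 : C.B), ((f i).2 : C.B)) ∈ M then
        pathWeightW w' s (List.ofFn fun i => (((f i).1 : C.B), ((f i).2 : C.B))) t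
      else 0

/-- The Morse-differential coefficient `∑_p w(p)` with the weights of `C` itself. -/
noncomputable def morseCoeff (C : BasedComplex R) (M : Set (C.B × C.B)) (s t : C.B) : R :=
  morseCoeffW C C.w M s t
/-- Chains in the complex, as coefficient functions on the basis (each degree has
finitely many basis elements). -/
noncomputable def BasedComplex.bdF (C : BasedComplex R) : (C.B → R) →ₗ[R] (C.B → R) :=
  LinearMap.pi fun a =>
    ∑ b : {b : C.B // C.dim b = C.dim a + 1}, C.w (b : C.B) a • LinearMap.proj (R := R) (b : C.B)

/-- The submodule of chains of degree `n`. -/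
def BasedComplex.degF (C : BasedComplex R) (n : ℤ) : Submodule R (C.B → R) :=
  { carrier := {x | ∀ b : C.B, C.dim b ≠ n → x b = 0}
    add_mem' := fun hx hy b hb => by simp [hx b hb, hy b hb]
    zero_mem' := fun b _ => rfl
    smul_mem' := fun c x hx b hb => by simp [hx b hb] }

/-- Homology of `C` in degree `n`: degree-`n` cycles modulo boundaries of
degree-`(n+1)` chains. -/
noncomputable abbrev BasedComplex.homologyAt (C : BasedComplex R) (n : ℤ) :=
  ↥(C.degF n ⊓ LinearMap.ker C.bdF) ⧸
    Submodule.comap (C.degF n ⊓ LinearMap.ker C.bdF).subtype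
      (Submodule.map C.bdF (C.degF (n + 1)))

open Classical in
/-- The boundary operator of the Morse complex, on chains generated by the critical
cells, with matrix entries the Morse coefficients `∑_p w(p)`. -/
noncomputable def morseBdF (C : BasedComplex R) (M : Set (C.B × C.B)) :
    ({b : C.B // IsCritical C M b} → R) →ₗ[R] ({b : C.B // IsCritical C M b} → R) :=
  LinearMap.pi fun t =>
    ∑ s : {s : C.B // C.dim s = C.dim (t : C.B) + 1},
      if h : IsCritical C M (s : C.B) then
        morseCoeff C M (s : C.B) (t : C.B) •
          LinearMap.proj (R := R) (⟨(s : C.B), h⟩ : {b : C.B // IsCritical C M b})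
      else 0

/-- Degree-`n` part of the Morse complex. -/
def morseDegF (C : BasedComplex R) (M : Set (C.B × C.B)) (n : ℤ) :
    Submodule R ({b : C.B // IsCritical C M b} → R) :=
  { carrier := {x | ∀ s : {b : C.B // IsCritical C M b}, C.dim (s : C.B) ≠ n → x s = 0}
    add_mem' := fun hx hy s hs => by simp [hx s hs, hy s hs]
    zero_mem' := fun s _ => rfl
    smul_mem' := fun c x hx s hs => by simp [hx s hs] }

/-- Homology of the Morse complex in degree `n`. -/
noncomputable abbrev morseHomologyAt (C : BasedComplex R) (M : Set (C.B × C.B)) (n : ℤ) :=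
  ↥(morseDegF C M n ⊓ LinearMap.ker (morseBdF C M)) ⧸
    Submodule.comap (morseDegF C M n ⊓ LinearMap.ker (morseBdF C M)).subtype
      (Submodule.map (morseBdF C M) (morseDegF C M (n + 1)))

namespace DMT

variable (C : BasedComplex R) (M : Set (C.B × C.B))

lemma bdF_apply (x : C.B → R) (a : C.B) :
    C.bdF x a = ∑ b : {b : C.B // C.dim b = C.dim a + 1}, C.w (b : C.B) a * x b := by
  simp [BasedComplex.bdF]

lemma sumDim_congr (g : C.B → R) {m m' : ℤ} (h : m = m') :
    ∑ b : {b : C.B // C.dim b = m}, g b = ∑ b : {b : C.B // C.dim b = m'}, g b := by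
  subst h; rfl

lemma mem_degF {x : C.B → R} {n : ℤ} :
    x ∈ C.degF n ↔ ∀ b : C.B, C.dim b ≠ n → x b = 0 := Iff.rfl

lemma bdF_sq (x : C.B → R) : C.bdF (C.bdF x) = 0 := by
  funext a
  rw [bdF_apply, Pi.zero_apply]
  have h1 : ∀ b : {b : C.B // C.dim b = C.dim a + 1},
      C.w (b : C.B) a * C.bdF x b
        = ∑ c : {c : C.B // C.dim c = C.dim a + 2},
            (C.w (c : C.B) (b : C.B) * C.w (b : C.B) a) * x c := by
    intro b
    rw [bdF_apply, Finset.mul_sum,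
      sumDim_congr C (fun c => C.w (b : C.B) a * (C.w c (b : C.B) * x c))
        (show C.dim (b : C.B) + 1 = C.dim a + 2 by have := b.2; omega)]
    apply Finset.sum_congr rfl
    intro c _; ring
  rw [Finset.sum_congr rfl (fun b _ => h1 b), Finset.sum_comm]
  apply Finset.sum_eq_zero
  intro c _
  rw [← Finset.sum_mul]
  have := C.dsq (c : C.B) a
  rw [sumDim_congr C (fun b => C.w (c : C.B) b * C.w b a)
    (show C.dim (c : C.B) - 1 = C.dim a + 1 by have := c.2; omega)] at this
  rw [this, zero_mul]

lemma bdF_deg {y : C.B → R} {n : ℤ} (hy : y ∈ C.degF (n + 1)) :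
    C.bdF y ∈ C.degF n := by
  intro a ha
  rw [bdF_apply]
  apply Finset.sum_eq_zero
  intro b _
  rw [hy (b : C.B) (by rw [b.2]; omega), mul_zero]

lemma pair_eq (hM : IsMatching C M) {p q : C.B × C.B} (hp : p ∈ M) (hq : q ∈ M)
    {x : C.B} (h1 : p.1 = x ∨ p.2 = x) (h2 : q.1 = x ∨ q.2 = x) : p = q := by
  by_contra hne
  obtain ⟨h11, h12, h21, h22⟩ := hM.2 p hp q hq hne
  rcases h1 with h1 | h1 <;> rcases h2 with h2 | h2 <;> simp_all

/-- Matched pairs whose lower member has degree `n`. -/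
def Pn (n : ℤ) : Type u := {p : C.B × C.B // p ∈ M ∧ C.dim p.1 = n}

lemma fst_inj (hM : IsMatching C M) (n : ℤ) {p q : Pn C M n}
    (h : p.1.1 = q.1.1) : p = q :=
  Subtype.ext (pair_eq C M hM p.2.1 q.2.1 (Or.inl h) (Or.inl rfl))

lemma snd_inj (hM : IsMatching C M) (n : ℤ) {p q : Pn C M n}
    (h : p.1.2 = q.1.2) : p = q :=
  Subtype.ext (pair_eq C M hM p.2.1 q.2.1 (Or.inr h) (Or.inr rfl))

noncomputable def PnFintype (hM : IsMatching C M) (n : ℤ) : Fintype (Pn C M n) :=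
  Fintype.ofInjective (fun p : Pn C M n => (⟨p.1.1, p.2.2⟩ : {b : C.B // C.dim b = n}))
    (fun p q h => fst_inj C M hM n (congrArg Subtype.val h))

lemma dim_snd (hM : IsMatching C M) {n : ℤ} (p : Pn C M n) :
    C.dim p.1.2 = n + 1 := by
  rw [(hM.1 p.1 p.2.1).1, p.2.2]

/-- The edge relation on level-`n` pairs: `E q p` iff `q ≠ p` and `w q.2 p.1 ≠ 0`. -/
def Erel (n : ℤ) (q p : Pn C M n) : Prop := q ≠ p ∧ C.w q.1.2 p.1.1 ≠ 0

lemma Erel_wf (hM : IsAcyclicMatching C M) (n : ℤ) : WellFounded (Erel C M n) := by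
  classical
  letI := PnFintype C M hM.1 n
  constructor
  intro a0
  by_contra ha0
  -- build an infinite descending chain
  have step : ∀ a : Pn C M n, ¬ Acc (Erel C M n) a →
      ∃ b, Erel C M n b a ∧ ¬ Acc (Erel C M n) b := by
    intro a ha
    by_contra h
    push_neg at h
    exact ha (Acc.intro a fun b hb => h b hb)
  choose g hg1 hg2 using step
  let f : ℕ → {a : Pn C M n // ¬ Acc (Erel C M n) a} := fun k =>
    Nat.rec ⟨a0, ha0⟩ (fun _ x => ⟨g x.1 x.2, hg2 x.1 x.2⟩) k
  let F : ℕ → Pn C M n := fun k => (f k).1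
  have hF : ∀ k, Erel C M n (F (k + 1)) (F k) := fun k => hg1 (f k).1 (f k).2
  -- pigeonhole
  have hex : ∃ j, ∃ i, i < j ∧ F i = F j := by
    obtain ⟨i, j, hij, hFe⟩ := Finite.exists_ne_map_eq_of_infinite F
    rcases lt_or_gt_of_ne hij with h | h
    · exact ⟨j, i, h, hFe⟩
    · exact ⟨i, j, h, hFe.symm⟩
  let j0 := Nat.find hex
  obtain ⟨i0, hi0, hFeq⟩ : ∃ i, i < j0 ∧ F i = F j0 := Nat.find_spec hex
  have hmin : ∀ t < j0, ∀ s < t, F s ≠ F t := by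
    intro t ht s hs hst
    exact Nat.find_min hex ht ⟨s, hs, hst⟩
  set L := j0 - i0 with hL
  have hL1 : 1 ≤ L := by omega
  have hL2 : 2 ≤ L := by
    by_contra h
    have : L = 1 := by omega
    have h1 : i0 + 1 = j0 := by omega
    have := (hF i0).1
    rw [h1, hFeq] at this
    exact this rfl
  obtain ⟨m, hm⟩ : ∃ m, L = m + 2 := ⟨L - 2, by omega⟩
  apply hM.2
  refine ⟨m, fun t => (F (i0 + (L - 1 - t.val))).1, ?_, ?_, ?_⟩
  · intro t t' htt'
    have hval : (F (i0 + (L - 1 - t.val))) = (F (i0 + (L - 1 - t'.val))) :=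
      Subtype.ext htt'
    have ht : t.val < m + 2 := t.2
    have ht' : t'.val < m + 2 := t'.2
    by_contra hne
    have hvne : t.val ≠ t'.val := fun h => hne (Fin.ext h)
    rcases Nat.lt_or_ge (L - 1 - t.val) (L - 1 - t'.val) with h | h
    · exact hmin (i0 + (L - 1 - t'.val)) (by omega) (i0 + (L - 1 - t.val)) (by omega) hval
    · have h' : L - 1 - t'.val < L - 1 - t.val := by omega
      exact hmin (i0 + (L - 1 - t.val)) (by omega) (i0 + (L - 1 - t'.val)) (by omega) hval.symm
  · intro t; exact (F (i0 + (L - 1 - t.val))).2.1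
  · intro t
    beta_reduce
    rcases Nat.lt_or_ge t.val (m + 1) with h | h
    · have h1 : ((t + 1 : Fin (m + 2))).val = t.val + 1 := by
        simp [Fin.add_def, Nat.mod_eq_of_lt (by omega : t.val + 1 < m + 2)]
      rw [h1, show i0 + (L - 1 - t.val) = (i0 + (L - 1 - (t.val + 1))) + 1 by omega]
      exact (hF (i0 + (L - 1 - (t.val + 1)))).2
    · have ht : t.val = m + 1 := by have := t.2; omega
      have h1 : ((t + 1 : Fin (m + 2))).val = 0 := by
        simp [Fin.add_def, ht]
      have := (hF (j0 - 1)).2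
      rw [show j0 - 1 + 1 = j0 by omega, ← hFeq] at this
      rw [h1, show i0 + (L - 1 - t.val) = i0 by omega, show i0 + (L - 1 - 0) = (j0 - 1 : ℕ) by omega]
      exact this

end DMT

namespace DMT

variable (C : BasedComplex R) (M : Set (C.B × C.B))

lemma claimA (hM : IsAcyclicMatching C M) (n : ℤ) [Fintype (Pn C M n)] (x : C.B → R) :
    ∃ y : C.B → R, y ∈ C.degF (n + 1) ∧ ∀ q : Pn C M n, C.bdF y q.1.1 = x q.1.1 := by
  classical
  have wf := Erel_wf C M hM n
  set Fc : (q : Pn C M n) → ((p : Pn C M n) → Erel C M n p q → R) → R := fun q rec =>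
    Ring.inverse (C.w q.1.2 q.1.1) *
      (x q.1.1 - ∑ p : Pn C M n,
        if h : Erel C M n p q then C.w p.1.2 q.1.1 * rec p h else 0) with hFc
  set c : Pn C M n → R := wf.fix Fc with hcdef
  have hc : ∀ q, c q = Ring.inverse (C.w q.1.2 q.1.1) *
      (x q.1.1 - ∑ p : Pn C M n,
        if _ : Erel C M n p q then C.w p.1.2 q.1.1 * c p else 0) :=
    fun q => wf.fix_eq Fc q
  have hsum : ∀ q : Pn C M n,
      (∑ p : Pn C M n, if _ : Erel C M n p q then C.w p.1.2 q.1.1 * c p else 0)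
        = ∑ p ∈ Finset.univ.erase q, C.w p.1.2 q.1.1 * c p := by
    intro q
    rw [← Finset.sum_erase (f := fun p : Pn C M n =>
        if _ : Erel C M n p q then C.w p.1.2 q.1.1 * c p else 0) Finset.univ
        (dif_neg (fun h => h.1 rfl))]
    apply Finset.sum_congr rfl
    intro p hp
    have hpq : p ≠ q := Finset.ne_of_mem_erase hp
    by_cases hw : C.w p.1.2 q.1.1 = 0
    · rw [dif_neg (fun h : Erel C M n p q => h.2 hw), hw, zero_mul]
    · rw [dif_pos ⟨hpq, hw⟩]
  have key : ∀ q : Pn C M n, ∑ p : Pn C M n, C.w p.1.2 q.1.1 * c p = x q.1.1 := by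
    intro q
    rw [← Finset.add_sum_erase Finset.univ _ (Finset.mem_univ q), hc q,
      Ring.mul_inverse_cancel_left _ _ (hM.1.1 q.1 q.2.1).2, hsum q]
    ring
  -- build y
  let ι : Pn C M n → {b : C.B // C.dim b = n + 1} := fun p => ⟨p.1.2, dim_snd C M hM.1 p⟩
  have hι : Function.Injective ι := fun p q h => snd_inj C M hM.1 n (congrArg Subtype.val h)
  let y : C.B → R := fun b => if h : ∃ p : Pn C M n, p.1.2 = b then c h.choose else 0
  have hy2 : ∀ p : Pn C M n, y p.1.2 = c p := by
    intro p
    have h : ∃ q : Pn C M n, q.1.2 = p.1.2 := ⟨p, rfl⟩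
    have he : h.choose = p := snd_inj C M hM.1 n h.choose_spec
    simp only [y, dif_pos h, he]
  refine ⟨y, ?_, ?_⟩
  · intro b hb
    simp only [y]
    rw [dif_neg]
    rintro ⟨p, rfl⟩
    exact hb (dim_snd C M hM.1 p)
  · intro q
    rw [bdF_apply, sumDim_congr C (fun b => C.w b q.1.1 * y b)
      (show C.dim q.1.1 + 1 = n + 1 by rw [q.2.2]), ← key q]
    have himg : ∑ b ∈ Finset.univ.image ι, C.w (b : C.B) q.1.1 * y b
        = ∑ p : Pn C M n, C.w p.1.2 q.1.1 * c p := by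
      rw [Finset.sum_image (fun p _ p' _ h => hι h)]
      exact Finset.sum_congr rfl (fun p _ => by rw [hy2 p])
    rw [← himg]
    apply (Finset.sum_subset (Finset.subset_univ _) _).symm
    intro b _ hb
    have hy0 : y (b : C.B) = 0 := by
      simp only [y]
      rw [dif_neg]
      rintro ⟨p, hp⟩
      exact hb (Finset.mem_image.mpr ⟨p, Finset.mem_univ p, Subtype.ext hp⟩)
    rw [hy0, mul_zero]

lemma claimB (hM : IsAcyclicMatching C M) (hall : ∀ b : C.B, ¬ IsCritical C M b)
    (n : ℤ) [Fintype (Pn C M (n - 1))] (z : C.B → R)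
    (hz1 : z ∈ C.degF n) (hz2 : C.bdF z = 0)
    (hz3 : ∀ p : C.B × C.B, p ∈ M → C.dim p.1 = n → z p.1 = 0) : z = 0 := by
  classical
  have hall' : ∀ b : C.B, ∃ p ∈ M, p.1 = b ∨ p.2 = b := by
    intro b
    have h := hall b
    unfold IsCritical at h
    push_neg at h
    obtain ⟨p, hp, hor⟩ := h
    refine ⟨p, hp, ?_⟩
    by_cases h1 : p.1 = b
    · exact Or.inl h1
    · exact Or.inr (hor h1)
  have key : ∀ p : Pn C M (n - 1), z p.1.2 = 0 := by
    intro p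
    induction p using (Erel_wf C M hM (n - 1)).induction with
    | _ p IH =>
    have h0 : C.bdF z p.1.1 = 0 := by rw [hz2]; rfl
    rw [bdF_apply] at h0
    have hb0 : C.dim p.1.2 = C.dim p.1.1 + 1 := (hM.1.1 p.1 p.2.1).1
    have hsingle : ∀ b : {b : C.B // C.dim b = C.dim p.1.1 + 1},
        b ≠ ⟨p.1.2, hb0⟩ → C.w (b : C.B) p.1.1 * z b = 0 := by
      intro b hb
      by_cases hw : C.w (b : C.B) p.1.1 = 0
      · rw [hw, zero_mul]
      have hdimb : C.dim (b : C.B) = n := by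
        have h1 := b.2
        have h2 := p.2.2
        omega
      obtain ⟨q, hq, hq2⟩ := hall' (b : C.B)
      rcases hq2 with h | h
      · rw [show z (b : C.B) = z q.1 by rw [h], hz3 q hq (by rw [h, hdimb]), mul_zero]
      · have hq1 : C.dim q.1 = n - 1 := by
          have h1 := (hM.1.1 q hq).1
          rw [h, hdimb] at h1
          omega
        have hQp : (⟨q, hq, hq1⟩ : Pn C M (n - 1)) ≠ p := by
          intro hcon
          apply hb
          apply Subtype.ext
          have h2 : q.2 = p.1.2 := congrArg (fun r : Pn C M (n - 1) => r.1.2) hcon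
          rw [← h]
          exact h2
        have hE : Erel C M (n - 1) ⟨q, hq, hq1⟩ p :=
          ⟨hQp, by show C.w q.2 p.1.1 ≠ 0; rw [h]; exact hw⟩
        rw [show z (b : C.B) = z q.2 by rw [h], IH ⟨q, hq, hq1⟩ hE, mul_zero]
    rw [Fintype.sum_eq_single (⟨p.1.2, hb0⟩ : {b : C.B // C.dim b = C.dim p.1.1 + 1}) hsingle]
      at h0
    obtain ⟨u, hu⟩ := (hM.1.1 p.1 p.2.1).2
    rw [← hu] at h0
    exact (Units.mul_right_eq_zero u).mp h0
  funext b
  by_cases hdim : C.dim b = n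
  · obtain ⟨q, hq, hq2⟩ := hall' b
    rcases hq2 with h | h
    · rw [show z b = z q.1 by rw [h]]
      exact hz3 q hq (by rw [h, hdim])
    · have hq1 : C.dim q.1 = n - 1 := by
        have h1 := (hM.1.1 q hq).1
        rw [h, hdim] at h1
        omega
      have := key ⟨q, hq, hq1⟩
      rw [show z b = z q.2 by rw [h]]
      exact this
  · exact hz1 b hdim

end DMT

/-- If an acyclic matching matches every basis element (there are no critical cells),
then the complex is acyclic: all homology groups vanish. -/
theorem acyclic_of_perfect_matching (C : BasedComplex R) (M : Set (C.B × C.B))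
    (hbdd : C.BoundedBelow) (hM : IsAcyclicMatching C M)
    (hall : ∀ b : C.B, ¬ IsCritical C M b) :
    ∀ n : ℤ, Subsingleton (C.homologyAt n) := by
  intro n
  classical
  letI : Fintype (DMT.Pn C M n) := DMT.PnFintype C M hM.1 n
  letI : Fintype (DMT.Pn C M (n - 1)) := DMT.PnFintype C M hM.1 (n - 1)
  rw [Submodule.Quotient.subsingleton_iff, eq_top_iff]
  rintro ⟨x, hx⟩ -
  obtain ⟨hx1, hx2⟩ := Submodule.mem_inf.mp hx
  have hx2' : C.bdF x = 0 := LinearMap.mem_ker.mp hx2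
  obtain ⟨y, hy1, hy2⟩ := DMT.claimA C M hM n x
  have hz : x - C.bdF y = 0 := by
    apply DMT.claimB C M hM hall n
    · exact Submodule.sub_mem _ hx1 (DMT.bdF_deg C hy1)
    · rw [map_sub, hx2', DMT.bdF_sq, sub_zero]
    · intro p hp hdim
      have := hy2 ⟨p, hp, hdim⟩
      simp only [Pi.sub_apply]
      rw [this]
      ring
  refine Submodule.mem_comap.mpr (Submodule.mem_map.mpr ⟨y, hy1, ?_⟩)
  have := sub_eq_zero.mp hz
  exact this.symm
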